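/- arXiv:2401.07998 — 2 statements merged into one kernel-verified Lean document; each statement's English description precedes it below -/
import Mathlib

section
/- Let R ⊆ ℕ be sparse with enumeration (r_n), let A_1, ..., A_m be operators with A_1 not identically zero on R, and let 0 < ε < 1. Then for all sufficiently large Δ ∈ ℕ: for every tuple of indices n_1 ≥ n_2 + Δ, n_2 ≥ n_3 + Δ, ..., n_{m-1} ≥ n_m + Δ, n_m ≥ Δ, we have (1−ε)·|A_1(n_1)| < |A_1(n_1) + A_2(n_2) + ... + A_m(n_m)| < (1+ε)·|A_1(n_1)|. -/
open Filter

/-- `opApp a k r n = Σ_{i=0}^{k} a_i · r(n+i)`. -/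
def opApp (a : ℕ → ℤ) (k : ℕ) (r : ℕ → ℕ) (n : ℕ) : ℤ :=
  ∑ i ∈ Finset.range (k + 1), a i * (r (n + i) : ℤ)

/-- Sparsity: trichotomy (S1) and condition (S2). -/
def IsSparse (r : ℕ → ℕ) : Prop :=
  ∀ (a : ℕ → ℤ) (k : ℕ),
    ((∀ n, opApp a k r n = 0) ∨ (∀ᶠ n in atTop, 0 < opApp a k r n) ∨
      (∀ᶠ n in atTop, opApp a k r n < 0)) ∧
    ((∀ᶠ n in atTop, 0 < opApp a k r n) → ∃ Δ : ℕ, ∀ n, (r n : ℤ) < opApp a k r (n + Δ))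

/-- The index tuple `z` lies in `R^m_Δ`: `z i ≥ z (i+1) + Δ` for all `i`,
where `z (m+1) := 0`. -/
def InCone (m : ℕ) (Δ : ℕ) (z : Fin m → ℕ) : Prop :=
  ∀ i : Fin m, (if h : (i : ℕ) + 1 < m then z ⟨(i : ℕ) + 1, h⟩ else 0) + Δ ≤ z i

lemma opApp_neg (a : ℕ → ℤ) (k : ℕ) (r : ℕ → ℕ) (n : ℕ) :
    opApp (fun i => -(a i)) k r n = -opApp a k r n := by
  simp [opApp, Finset.sum_neg_distrib, neg_mul]

lemma opApp_abs_le (a : ℕ → ℤ) (k : ℕ) (r : ℕ → ℕ) (hmono : StrictMono r) (n : ℕ) :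
    |opApp a k r n| ≤ (∑ i ∈ Finset.range (k + 1), ((a i).natAbs : ℤ)) * (r (n + k) : ℤ) := by
  calc |opApp a k r n| ≤ ∑ i ∈ Finset.range (k + 1), |a i * (r (n + i) : ℤ)| :=
        Finset.abs_sum_le_sum_abs _ _
    _ ≤ ∑ i ∈ Finset.range (k + 1), ((a i).natAbs : ℤ) * (r (n + k) : ℤ) := by
        apply Finset.sum_le_sum
        intro i hi
        rw [abs_mul, Int.abs_eq_natAbs, Nat.abs_cast]
        apply mul_le_mul_of_nonneg_left _ (by positivity)
        have hik : i ≤ k := Nat.lt_succ_iff.mp (Finset.mem_range.mp hi)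
        exact_mod_cast hmono.monotone (by omega : n + i ≤ n + k)
    _ = _ := by rw [Finset.sum_mul]

lemma growth (r : ℕ → ℕ) (hmono : StrictMono r) (hsparse : IsSparse r) (M : ℕ) :
    ∃ s : ℕ, ∀ n, M * r n < r (n + s) := by
  set b : ℕ → ℤ := fun i => if i = 0 then -1 else 1 with hb
  have hval : ∀ n, opApp b 1 r n = (r (n + 1) : ℤ) - (r n : ℤ) := by
    intro n
    simp [opApp, hb, Finset.sum_range_succ]
    ring
  have hpos : ∀ᶠ n in atTop, 0 < opApp b 1 r n := by
    apply Eventually.of_forall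
    intro n
    rw [hval]
    have := hmono (by omega : n < n + 1)
    omega
  obtain ⟨Δ₁, hΔ₁⟩ := (hsparse b 1).2 hpos
  -- doubling
  have hdouble : ∀ n, 2 * r n < r (n + (Δ₁ + 1)) := by
    intro n
    have h1 := hΔ₁ n
    rw [hval] at h1
    have h2 : r n ≤ r (n + Δ₁) := hmono.monotone (by omega)
    have : (n + Δ₁) + 1 = n + (Δ₁ + 1) := by ring
    rw [this] at h1
    omega
  set s₁ := Δ₁ + 1 with hs₁
  have hpow : ∀ t n, 2 ^ t * r n < r (n + (t + 1) * s₁) := by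
    intro t
    induction t with
    | zero =>
      intro n
      have := hdouble n
      simpa using by omega
    | succ t ih =>
      intro n
      have h1 := ih n
      have h2 := hdouble (n + (t + 1) * s₁)
      have : 2 ^ (t + 1) * r n = 2 * (2 ^ t * r n) := by ring
      rw [this]
      have h3 : 2 * (2 ^ t * r n) < 2 * r (n + (t + 1) * s₁) := by omega
      have h4 : n + (t + 1) * s₁ + s₁ = n + (t + 1 + 1) * s₁ := by ring
      rw [h4] at h2
      omega
  refine ⟨(M + 1) * s₁, fun n => ?_⟩
  have h1 : M ≤ 2 ^ M := Nat.le_of_lt ((Nat.lt_two_pow_self (n := M)))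
  calc M * r n ≤ 2 ^ M * r n := Nat.mul_le_mul_right _ h1
    _ < r (n + (M + 1) * s₁) := hpow M n

lemma cone_step {m Δ : ℕ} {z : Fin m → ℕ} (hz : InCone m Δ z)
    (t : ℕ) (h : t + 1 < m) : z ⟨t + 1, h⟩ + Δ ≤ z ⟨t, by omega⟩ := by
  have := hz ⟨t, by omega⟩
  simpa [dif_pos h] using this

lemma cone_zero {m Δ : ℕ} {z : Fin m → ℕ} (hz : InCone m Δ z) (hm : 0 < m) :
    ∀ t (h : t < m), 0 < t → z ⟨t, h⟩ + Δ ≤ z ⟨0, hm⟩ := by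
  intro t
  induction t with
  | zero => intro _ h; omega
  | succ t ih =>
    intro h _
    have h1 := cone_step hz t h
    rcases Nat.eq_zero_or_pos t with ht | ht
    · subst ht; exact h1
    · have h2 := ih (by omega) ht
      omega

lemma cone_ge_delta {m Δ : ℕ} {z : Fin m → ℕ} (hz : InCone m Δ z) (hm : 0 < m) :
    Δ ≤ z ⟨0, hm⟩ := by
  rcases Nat.lt_or_ge 1 m with h1 | h1
  · have := cone_zero hz hm 1 h1 one_pos
    omega
  · have := hz ⟨0, hm⟩
    have hcond : ¬ ((0 : ℕ) + 1 < m) := by omega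
    simpa [dif_neg hcond] using this

lemma lower_bound (r : ℕ → ℕ) (hsparse : IsSparse r) (a : ℕ → ℤ) (k : ℕ)
    (hA : ¬ ∀ n, opApp a k r n = 0) :
    ∃ Δ₀ : ℕ, ∀ n, (r n : ℤ) < |opApp a k r (n + Δ₀)| := by
  rcases (hsparse a k).1 with h0 | hp | hn
  · exact absurd h0 hA
  · obtain ⟨Δ₀, hΔ₀⟩ := (hsparse a k).2 hp
    exact ⟨Δ₀, fun n => lt_of_lt_of_le (hΔ₀ n) (le_abs_self _)⟩
  · have hp' : ∀ᶠ n in atTop, 0 < opApp (fun i => -(a i)) k r n := by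
      filter_upwards [hn] with n hn'
      rw [opApp_neg]; omega
    obtain ⟨Δ₀, hΔ₀⟩ := (hsparse (fun i => -(a i)) k).2 hp'
    refine ⟨Δ₀, fun n => ?_⟩
    have := hΔ₀ n
    rw [opApp_neg] at this
    exact lt_of_lt_of_le this (neg_le_abs _)

/-- domination of the leading term: for sufficiently large `Δ`, the sum
`Σ_i A_i(n_i)` over a `Δ`-spread tuple has absolute value within a factor `1 ± ε`
of `|A_1(n_1)|`. -/
theorem leading_term_dominates (r : ℕ → ℕ) (hmono : StrictMono r) (hsparse : IsSparse r)
    (m : ℕ) (hm : 0 < m) (a : Fin m → ℕ → ℤ) (K : Fin m → ℕ)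
    (hA1 : ¬ ∀ n, opApp (a ⟨0, hm⟩) (K ⟨0, hm⟩) r n = 0)
    (ε : ℝ) (hε0 : 0 < ε) (hε1 : ε < 1) :
    ∀ᶠ Δ : ℕ in atTop, ∀ z : Fin m → ℕ, InCone m Δ z →
      (1 - ε) * |(opApp (a ⟨0, hm⟩) (K ⟨0, hm⟩) r (z ⟨0, hm⟩) : ℝ)| <
          |((∑ i, opApp (a i) (K i) r (z i) : ℤ) : ℝ)| ∧
      |((∑ i, opApp (a i) (K i) r (z i) : ℤ) : ℝ)| <
          (1 + ε) * |(opApp (a ⟨0, hm⟩) (K ⟨0, hm⟩) r (z ⟨0, hm⟩) : ℝ)| := by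
  set i0 : Fin m := ⟨0, hm⟩ with hi0
  obtain ⟨Δ₀, hΔ₀⟩ := lower_bound r hsparse (a i0) (K i0) hA1
  set Kmax := Finset.univ.sup K with hKmax
  set C : ℕ := ∑ i : Fin m, ∑ j ∈ Finset.range (K i + 1), (a i j).natAbs with hCdef
  set M : ℕ := ⌈(C : ℝ) / ε⌉₊ with hMdef
  have hCM : (C : ℝ) ≤ ε * M := by
    have h1 : (C : ℝ) / ε ≤ M := Nat.le_ceil _
    calc (C : ℝ) = ((C : ℝ) / ε) * ε := by field_simp
      _ ≤ (M : ℝ) * ε := mul_le_mul_of_nonneg_right h1 hε0.le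
      _ = ε * M := mul_comm _ _
  obtain ⟨s, hs⟩ := growth r hmono hsparse M
  filter_upwards [eventually_ge_atTop (Δ₀ + Kmax + s + 1)] with Δ hΔ z hz
  set n₀ := z i0 with hn₀
  have hΔn₀ : Δ ≤ n₀ := cone_ge_delta hz hm
  have hlow : (r (n₀ - Δ₀) : ℤ) < |opApp (a i0) (K i0) r n₀| := by
    have := hΔ₀ (n₀ - Δ₀)
    rwa [Nat.sub_add_cancel (by omega)] at this
  have hr1 : (1 : ℕ) ≤ r (n₀ - Δ₀) := by
    have h2 : n₀ - Δ₀ ≤ r (n₀ - Δ₀) := hmono.le_apply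
    omega
  set F : Fin m → ℤ := fun i => opApp (a i) (K i) r (z i) with hF
  have hsplit : ∑ i, F i = F i0 + ∑ i ∈ Finset.univ.erase i0, F i :=
    (Finset.add_sum_erase _ F (Finset.mem_univ i0)).symm
  -- bound on the tail sum
  have hSb : |∑ i ∈ Finset.univ.erase i0, F i| ≤ (C : ℤ) * (r (n₀ - Δ + Kmax) : ℤ) := by
    calc |∑ i ∈ Finset.univ.erase i0, F i|
        ≤ ∑ i ∈ Finset.univ.erase i0, |F i| := Finset.abs_sum_le_sum_abs _ _
      _ ≤ ∑ i ∈ Finset.univ.erase i0,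
            (∑ j ∈ Finset.range (K i + 1), ((a i j).natAbs : ℤ)) * (r (n₀ - Δ + Kmax) : ℤ) := by
          apply Finset.sum_le_sum
          intro i hi
          have hine : i ≠ i0 := Finset.ne_of_mem_erase hi
          have hipos : 0 < (i : ℕ) := by
            rcases Nat.eq_zero_or_pos (i : ℕ) with h | h
            · exact absurd (Fin.ext h : i = i0) hine
            · exact h
          have hzi : z i + Δ ≤ n₀ := by
            have := cone_zero hz hm (i : ℕ) i.isLt hipos
            simpa using this
          have hKi : K i ≤ Kmax := Finset.le_sup (Finset.mem_univ i)
          have hidx : z i + K i ≤ n₀ - Δ + Kmax := by omega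
          calc |F i| ≤ (∑ j ∈ Finset.range (K i + 1), ((a i j).natAbs : ℤ)) *
                (r (z i + K i) : ℤ) := opApp_abs_le _ _ _ hmono _
            _ ≤ _ := by
                apply mul_le_mul_of_nonneg_left _ (by positivity)
                exact_mod_cast hmono.monotone hidx
      _ ≤ ∑ i : Fin m,
            (∑ j ∈ Finset.range (K i + 1), ((a i j).natAbs : ℤ)) * (r (n₀ - Δ + Kmax) : ℤ) := by
          apply Finset.sum_le_sum_of_subset_of_nonneg (Finset.erase_subset _ _)
          intro i _ _
          positivity
      _ = (C : ℤ) * (r (n₀ - Δ + Kmax) : ℤ) := by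
          rw [← Finset.sum_mul, hCdef]
          push_cast
          ring
  have hgr : M * r (n₀ - Δ + Kmax) < r (n₀ - Δ₀) := by
    have h1 := hs (n₀ - Δ + Kmax)
    have h2 : n₀ - Δ + Kmax + s ≤ n₀ - Δ₀ := by omega
    exact lt_of_lt_of_le h1 (hmono.monotone h2)
  -- move to the reals
  set L : ℝ := |(opApp (a i0) (K i0) r n₀ : ℝ)| with hL
  have hlowR : (r (n₀ - Δ₀) : ℝ) < L := by
    rw [hL, ← Int.cast_abs]
    exact_mod_cast hlow
  have hr1R : (1 : ℝ) ≤ (r (n₀ - Δ₀) : ℝ) := by exact_mod_cast hr1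
  have hLpos : 0 < L := by linarith
  have hSR : |((∑ i ∈ Finset.univ.erase i0, F i : ℤ) : ℝ)| < ε * L := by
    have h1 : |((∑ i ∈ Finset.univ.erase i0, F i : ℤ) : ℝ)| ≤
        (C : ℝ) * (r (n₀ - Δ + Kmax) : ℝ) := by
      rw [← Int.cast_abs]
      exact_mod_cast hSb
    have h2 : (C : ℝ) * (r (n₀ - Δ + Kmax) : ℝ) ≤ ε * ((M : ℝ) * (r (n₀ - Δ + Kmax) : ℝ)) := by
      have := mul_le_mul_of_nonneg_right hCM (by positivity : (0:ℝ) ≤ (r (n₀ - Δ + Kmax) : ℝ))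
      linarith [this]
    have h3 : (M : ℝ) * (r (n₀ - Δ + Kmax) : ℝ) < (r (n₀ - Δ₀) : ℝ) := by exact_mod_cast hgr
    have h4 : ε * ((M : ℝ) * (r (n₀ - Δ + Kmax) : ℝ)) < ε * (r (n₀ - Δ₀) : ℝ) :=
      mul_lt_mul_of_pos_left h3 hε0
    have h5 : ε * (r (n₀ - Δ₀) : ℝ) < ε * L := mul_lt_mul_of_pos_left hlowR hε0
    linarith
  have htot : ((∑ i, F i : ℤ) : ℝ) =
      ((F i0 : ℤ) : ℝ) + ((∑ i ∈ Finset.univ.erase i0, F i : ℤ) : ℝ) := by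
    rw [hsplit]; push_cast; ring
  have hFi0 : |((F i0 : ℤ) : ℝ)| = L := rfl
  set x : ℝ := ((F i0 : ℤ) : ℝ)
  set y : ℝ := ((∑ i ∈ Finset.univ.erase i0, F i : ℤ) : ℝ)
  have habs1 : |x + y| ≤ |x| + |y| := abs_add_le _ _
  have habs2 : |x| ≤ |x + y| + |y| := by
    have := abs_add_le (x + y) (-y)
    simpa using this
  constructor
  · rw [htot]
    rw [hFi0] at habs2
    linarith
  · rw [htot]
    rw [hFi0] at habs1
    linarith
end

section
/- Let R ⊆ ℕ be sparse with enumeration (r_n), and let A be an operator that is eventually positive on R. Then for every k ∈ ℕ there exists Δ ∈ ℕ such that A(n+Δ) > k·r(n) for all n ∈ ℕ. -/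
open Filter

lemma opApp_shift_sub (a : ℕ → ℤ) (k : ℕ) (r : ℕ → ℕ) (Δ : ℕ) (c : ℤ) (n : ℕ) :
    opApp (fun j => (if j = 0 then -c else 0) + (if Δ ≤ j then a (j - Δ) else 0)) (k + Δ) r n
      = opApp a k r (n + Δ) - c * r n := by
  unfold opApp
  simp only [add_mul, Finset.sum_add_distrib, ite_mul, zero_mul]
  have h1 : ∑ j ∈ Finset.range (k + Δ + 1), (if j = 0 then -c * (r (n + j) : ℤ) else 0)
      = -c * r n := by
    rw [Finset.sum_ite_eq' (Finset.range (k + Δ + 1)) 0 (fun j => -c * (r (n + j) : ℤ))]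
    simp
  rw [h1]
  have h2 : ∑ j ∈ Finset.range (k + Δ + 1), (if Δ ≤ j then a (j - Δ) * (r (n + j) : ℤ) else 0)
      = ∑ i ∈ Finset.range (k + 1), a i * (r (n + Δ + i) : ℤ) := by
    rw [Finset.range_eq_Ico, show k + Δ + 1 = Δ + (k + 1) by omega,
      ← Finset.sum_Ico_consecutive _ (Nat.zero_le Δ) (Nat.le_add_right Δ (k + 1))]
    have hz : ∑ j ∈ Finset.Ico 0 Δ, (if Δ ≤ j then a (j - Δ) * (r (n + j) : ℤ) else 0) = 0 := by
      apply Finset.sum_eq_zero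
      intro j hj
      simp only [Finset.mem_Ico] at hj
      rw [if_neg (by omega)]
    rw [hz, zero_add, Finset.sum_Ico_eq_sum_range,
      show Δ + (k + 1) - Δ = k + 1 by omega]
    apply Finset.sum_congr rfl
    intro i _
    rw [if_pos (Nat.le_add_right Δ i)]
    congr 1
    · congr 1; omega
    · congr 2; omega
  rw [h2]
  ring

/-- an eventually positive operator on a sparse set eventually beats
every natural multiple of the enumeration, after a suitable shift. -/
theorem shift_beats_multiple (r : ℕ → ℕ) (hmono : StrictMono r) (hsparse : IsSparse r)
    (a : ℕ → ℤ) (k : ℕ) (hpos : ∀ᶠ n in atTop, 0 < opApp a k r n) :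
    ∀ c : ℕ, ∃ Δ : ℕ, ∀ n : ℕ, (c : ℤ) * (r n : ℤ) < opApp a k r (n + Δ) := by
  intro c
  induction c with
  | zero =>
    obtain ⟨Δ, hΔ⟩ := (hsparse a k).2 hpos
    refine ⟨Δ, fun n => ?_⟩
    have := hΔ n
    have h0 : (0 : ℤ) ≤ (r n : ℤ) := Int.ofNat_nonneg _
    push_cast
    linarith
  | succ c ih =>
    obtain ⟨Δ, hΔ⟩ := ih
    set b : ℕ → ℤ := fun j => (if j = 0 then -(c : ℤ) else 0) + (if Δ ≤ j then a (j - Δ) else 0)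
      with hb
    have hkey : ∀ n, opApp b (k + Δ) r n = opApp a k r (n + Δ) - (c : ℤ) * r n :=
      opApp_shift_sub a k r Δ (c : ℤ)
    have hbpos : ∀ᶠ n in atTop, 0 < opApp b (k + Δ) r n := by
      apply Eventually.of_forall
      intro n
      rw [hkey]
      have := hΔ n
      linarith
    obtain ⟨Δ₂, hΔ₂⟩ := (hsparse b (k + Δ)).2 hbpos
    refine ⟨Δ + Δ₂, fun n => ?_⟩
    have h1 := hΔ₂ n
    rw [hkey] at h1
    have h2 : (r n : ℤ) ≤ (r (n + Δ₂) : ℤ) := by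
      exact_mod_cast hmono.monotone (Nat.le_add_right n Δ₂)
    have h3 : (c : ℤ) * (r n : ℤ) ≤ (c : ℤ) * (r (n + Δ₂) : ℤ) :=
      mul_le_mul_of_nonneg_left h2 (Int.ofNat_nonneg c)
    have h4 : opApp a k r (n + Δ₂ + Δ) = opApp a k r (n + (Δ + Δ₂)) := by
      congr 1; omega
    rw [h4] at h1
    push_cast
    linarith
end
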